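/- Assume N₊ ≥ 1 and N₋ ≥ 1, and let S be an arbitrary invertible 2×2 complex matrix. Then (i) an element ω ∈ Ω satisfies dω = 0 if and only if ω ∼ a + Σ_α ξ₁₊^α a₊_α + Σ_α ξ₁₋^α a₋_α + (Σ_{α,β} ξ₁₊^α ξ₁₋^β (ΓC⁻¹)_{αβ}) a₊₋ for some polynomials a, a₊_α, a₋_α, a₊₋ lying in the subring ℂ[ψ₂,…,ψ_{N₊}, χ₂,…,χ_{N₋}] of R; and (ii) such a combination is ∼ 0 if and only if a = a₊₋ = 0, Σ_α ξ₁₊^α a₊_α = 0 and Σ_α ξ₁₋^α a₋_α = 0. -/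

import Mathlib

/-!
D = 2, signature (1,1) supersymmetry algebra cohomology.
`R2 Np Nm = ℂ[ψ₁,…,ψ_{N₊}, χ₁,…,χ_{N₋}]`, `Om2` is the free module with basis
`{1, c̃₁, c̃₂, c̃₁c̃₂}`, and `d2` is the differential with `dc̃₁ = P`, `dc̃₂ = Q`.
-/

open MvPolynomial

noncomputable section

/-- The polynomial ring `ℂ[ψ₁,…,ψ_{N₊}, χ₁,…,χ_{N₋}]`; `Sum.inl i ↦ ψᵢ`, `Sum.inr i ↦ χᵢ`. -/
abbrev R2 (Np Nm : ℕ) : Type := MvPolynomial (Fin Np ⊕ Fin Nm) ℂ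

/-- `Ω`: free `R2`-module with basis `{1, c̃₁, c̃₂, c̃₁c̃₂}` (components 0,1,2,3). -/
abbrev Om2 (Np Nm : ℕ) : Type := Fin 4 → R2 Np Nm

/-- The ghost `ψᵢ`. -/
def ψ {Np Nm : ℕ} (i : Fin Np) : R2 Np Nm := X (Sum.inl i)

/-- The ghost `χᵢ`. -/
def χ {Np Nm : ℕ} (i : Fin Nm) : R2 Np Nm := X (Sum.inr i)

/-- `P = Σ ψᵢ²`. -/
def Pp (Np Nm : ℕ) : R2 Np Nm := ∑ i, ψ i ^ 2

/-- `Q = Σ χᵢ²`. -/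
def Qq (Np Nm : ℕ) : R2 Np Nm := ∑ i, χ i ^ 2

/-- The differential `d(ω₀ + c̃₁ω₁ + c̃₂ω₂ + c̃₁c̃₂ω₃) = Pω₁ + Qω₂ + (Pc̃₂ − Qc̃₁)ω₃`. -/
def d2 {Np Nm : ℕ} (ω : Om2 Np Nm) : Om2 Np Nm :=
  ![Pp Np Nm * ω 1 + Qq Np Nm * ω 2, -(Qq Np Nm * ω 3), Pp Np Nm * ω 3, 0]

/-- Embedding of `R` into `Ω` (coefficient of the basis element `1`). -/
def ofR {Np Nm : ℕ} (r : R2 Np Nm) : Om2 Np Nm := ![r, 0, 0, 0]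

/-- `ω ∼ ω'` iff `ω − ω' = dρ` for some `ρ`. -/
def Equiv2 {Np Nm : ℕ} (ω ω' : Om2 Np Nm) : Prop := ∃ ρ, ω - ω' = d2 ρ


/-- The subring `ℂ[ψ₂,…,ψ_{N₊}, χ₂,…,χ_{N₋}]` of `R2 Np Nm`. -/
def coefRing (Np Nm : ℕ) (hp : 0 < Np) (hm : 0 < Nm) : Subalgebra ℂ (R2 Np Nm) :=
  MvPolynomial.supported ℂ
    {v : Fin Np ⊕ Fin Nm | v ≠ Sum.inl ⟨0, hp⟩ ∧ v ≠ Sum.inr ⟨0, hm⟩}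

/-- Pauli matrix σ₂. -/
def sigma2 : Matrix (Fin 2) (Fin 2) ℂ := !![0, -Complex.I; Complex.I, 0]

/-- Pauli matrix σ₃. -/
def sigma3 : Matrix (Fin 2) (Fin 2) ℂ := !![1, 0; 0, -1]

/-- Chirality matrix `Γ = S σ₃ S⁻¹` in the representation given by `S`. -/
def Gam (S : Matrix (Fin 2) (Fin 2) ℂ) : Matrix (Fin 2) (Fin 2) ℂ := S * sigma3 * S⁻¹

/-- Charge conjugation matrix `C = (Sᵀ)⁻¹ σ₂ S⁻¹` in the representation given by `S`. -/
def Cmat (S : Matrix (Fin 2) (Fin 2) ℂ) : Matrix (Fin 2) (Fin 2) ℂ :=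
  (S.transpose)⁻¹ * sigma2 * S⁻¹

/-- The positive-chirality supersymmetry ghost `ξᵢ₊ = (ψᵢ, 0)·S⁻¹`. -/
def xiP {Np Nm : ℕ} (S : Matrix (Fin 2) (Fin 2) ℂ) (i : Fin Np) (α : Fin 2) :
    R2 Np Nm := C (S⁻¹ 0 α) * ψ i

/-- The negative-chirality supersymmetry ghost `ξᵢ₋ = (0, iχᵢ)·S⁻¹`. -/
def xiM {Np Nm : ℕ} (S : Matrix (Fin 2) (Fin 2) ℂ) (i : Fin Nm) (α : Fin 2) :
    R2 Np Nm := C (Complex.I * S⁻¹ 1 α) * χ i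

namespace Stmt3Aux

variable (Np Nm : ℕ) (hp : 0 < Np) (hm : 0 < Nm)

def SSet : Set (Fin Np ⊕ Fin Nm) :=
  {v | v ≠ Sum.inl ⟨0, hp⟩ ∧ v ≠ Sum.inr ⟨0, hm⟩}

abbrev A2 := MvPolynomial (SSet Np Nm hp hm) ℂ

abbrev B2 := Polynomial (Polynomial (A2 Np Nm hp hm))

noncomputable instance instB2NUNAR : NonUnitalNonAssocRing (B2 Np Nm hp hm) :=
  letI R : Ring (B2 Np Nm hp hm) := inferInstance
  letI R' : NonUnitalRing _ := Ring.toNonUnitalRing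
  R'.toNonUnitalNonAssocRing

noncomputable instance instB2DistribNeg : HasDistribNeg (B2 Np Nm hp hm) :=
  NonUnitalNonAssocRing.toHasDistribNeg

def emb (v : Fin Np ⊕ Fin Nm) : B2 Np Nm hp hm :=
  if h1 : v = Sum.inl ⟨0, hp⟩ then Polynomial.C Polynomial.X
  else if h2 : v = Sum.inr ⟨0, hm⟩ then Polynomial.X
  else Polynomial.C (Polynomial.C (X (⟨v, h1, h2⟩ : SSet Np Nm hp hm)))

def Φ : R2 Np Nm →ₐ[ℂ] B2 Np Nm hp hm := aeval (emb Np Nm hp hm)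

def jj : A2 Np Nm hp hm →ₐ[ℂ] R2 Np Nm := rename Subtype.val

def innerHom : Polynomial (A2 Np Nm hp hm) →+* R2 Np Nm :=
  Polynomial.eval₂RingHom (jj Np Nm hp hm).toRingHom (ψ ⟨0, hp⟩)

def Ψ : B2 Np Nm hp hm →+* R2 Np Nm :=
  Polynomial.eval₂RingHom (innerHom Np Nm hp hm) (χ ⟨0, hm⟩)

variable {Np Nm}

lemma emb_inl0 : emb Np Nm hp hm (Sum.inl ⟨0, hp⟩) = Polynomial.C Polynomial.X :=
  dif_pos rfl

lemma emb_inr0 : emb Np Nm hp hm (Sum.inr ⟨0, hm⟩) = Polynomial.X := by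
  rw [emb, dif_neg (by simp), dif_pos rfl]

lemma emb_mem (v : Fin Np ⊕ Fin Nm) (h1 : v ≠ Sum.inl ⟨0, hp⟩) (h2 : v ≠ Sum.inr ⟨0, hm⟩) :
    emb Np Nm hp hm v = Polynomial.C (Polynomial.C (X (⟨v, h1, h2⟩ : SSet Np Nm hp hm))) := by
  rw [emb, dif_neg h1, dif_neg h2]

lemma Φ_ψ0 : Φ Np Nm hp hm (ψ ⟨0, hp⟩) = Polynomial.C Polynomial.X := by
  rw [ψ, Φ, aeval_X, emb_inl0]

lemma Φ_χ0 : Φ Np Nm hp hm (χ ⟨0, hm⟩) = Polynomial.X := by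
  rw [χ, Φ, aeval_X, emb_inr0]

lemma Φ_jj (a : A2 Np Nm hp hm) :
    Φ Np Nm hp hm (jj Np Nm hp hm a) = Polynomial.C (Polynomial.C a) := by
  induction a using MvPolynomial.induction_on with
  | C c => simp [jj, Φ, algebraMap_eq]
  | add p q ihp ihq => simp [map_add, ihp, ihq]
  | mul_X p v ih =>
      have h1 : Φ Np Nm hp hm (jj Np Nm hp hm (X v)) = Polynomial.C (Polynomial.C (X v)) := by
        rw [jj, rename_X, Φ, aeval_X, emb_mem hp hm v.val v.2.1 v.2.2]
      rw [map_mul, map_mul, ih, h1, ← Polynomial.C_mul, ← Polynomial.C_mul]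

lemma Ψ_C (x : Polynomial (A2 Np Nm hp hm)) :
    Ψ Np Nm hp hm (Polynomial.C x) = innerHom Np Nm hp hm x := by
  simp [Ψ]

lemma Ψ_X : Ψ Np Nm hp hm Polynomial.X = χ ⟨0, hm⟩ := by simp [Ψ]

lemma innerHom_C (a : A2 Np Nm hp hm) :
    innerHom Np Nm hp hm (Polynomial.C a) = jj Np Nm hp hm a := by
  simp [innerHom]

lemma innerHom_X : innerHom Np Nm hp hm Polynomial.X = ψ ⟨0, hp⟩ := by simp [innerHom]

lemma Ψ_Φ (r : R2 Np Nm) : Ψ Np Nm hp hm (Φ Np Nm hp hm r) = r := by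
  induction r using MvPolynomial.induction_on with
  | C c =>
      simp [Φ, algebraMap_eq, Ψ_C, innerHom_C, jj]
  | add p q ihp ihq => simp [map_add, ihp, ihq]
  | mul_X p v ih =>
      rw [map_mul, map_mul, ih]
      refine congrArg (HMul.hMul p) ?_
      rw [Φ, aeval_X]
      rcases Decidable.em (v = Sum.inl ⟨0, hp⟩) with h1 | h1
      · subst h1; rw [emb_inl0, Ψ_C, innerHom_X]; rfl
      rcases Decidable.em (v = Sum.inr ⟨0, hm⟩) with h2 | h2
      · subst h2; rw [emb_inr0, Ψ_X]; rfl
      · rw [emb_mem hp hm v h1 h2, Ψ_C, innerHom_C, jj, rename_X]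


def e2p (i : Fin Np) : A2 Np Nm hp hm :=
  if h : i = ⟨0, hp⟩ then 0
  else X (⟨Sum.inl i, fun hc => h (Sum.inl.inj hc), fun hc => Sum.inl_ne_inr hc⟩ :
    SSet Np Nm hp hm) ^ 2

def e2q (i : Fin Nm) : A2 Np Nm hp hm :=
  if h : i = ⟨0, hm⟩ then 0
  else X (⟨Sum.inr i, fun hc => Sum.inr_ne_inl hc, fun hc => h (Sum.inr.inj hc)⟩ :
    SSet Np Nm hp hm) ^ 2

def pbar : A2 Np Nm hp hm := ∑ i, e2p hp hm i
def qbar : A2 Np Nm hp hm := ∑ i, e2q hp hm i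

def ww : Polynomial (A2 Np Nm hp hm) :=
  Polynomial.X ^ 2 + Polynomial.C (pbar hp hm)

def WW : B2 Np Nm hp hm :=
  Polynomial.X ^ 2 + Polynomial.C (Polynomial.C (qbar hp hm))

lemma ww_monic : (ww hp hm (Np := Np) (Nm := Nm)).Monic :=
  Polynomial.monic_X_pow_add_C _ (by norm_num)

lemma WW_monic : (WW hp hm (Np := Np) (Nm := Nm)).Monic :=
  Polynomial.monic_X_pow_add_C _ (by norm_num)

lemma ww_degree : (ww hp hm (Np := Np) (Nm := Nm)).degree = 2 :=
  Polynomial.degree_X_pow_add_C (by norm_num) _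

lemma WW_degree : (WW hp hm (Np := Np) (Nm := Nm)).degree = 2 :=
  Polynomial.degree_X_pow_add_C (by norm_num) _

lemma hP : Pp Np Nm = ψ ⟨0, hp⟩ ^ 2 + jj Np Nm hp hm (pbar hp hm) := by
  have h1 : ∀ i : Fin Np, (ψ i ^ 2 : R2 Np Nm)
      = (if i = ⟨0, hp⟩ then ψ ⟨0, hp⟩ ^ 2 else 0) + jj Np Nm hp hm (e2p hp hm i) := by
    intro i
    by_cases h : i = ⟨0, hp⟩
    · subst h; simp [e2p]
    · simp [e2p, h, jj, ψ]
  rw [Pp, Finset.sum_congr rfl fun i _ => h1 i, Finset.sum_add_distrib,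
    Finset.sum_ite_eq' Finset.univ (⟨0, hp⟩ : Fin Np), pbar, map_sum]
  simp

lemma hQ : Qq Np Nm = χ ⟨0, hm⟩ ^ 2 + jj Np Nm hp hm (qbar hp hm) := by
  have h1 : ∀ i : Fin Nm, (χ i ^ 2 : R2 Np Nm)
      = (if i = ⟨0, hm⟩ then χ ⟨0, hm⟩ ^ 2 else 0) + jj Np Nm hp hm (e2q hp hm i) := by
    intro i
    by_cases h : i = ⟨0, hm⟩
    · subst h; simp [e2q]
    · simp [e2q, h, jj, χ]
  rw [Qq, Finset.sum_congr rfl fun i _ => h1 i, Finset.sum_add_distrib,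
    Finset.sum_ite_eq' Finset.univ (⟨0, hm⟩ : Fin Nm), qbar, map_sum]
  simp

lemma Φ_P : Φ Np Nm hp hm (Pp Np Nm) = Polynomial.C (ww hp hm) := by
  rw [hP hp hm, map_add, map_pow, Φ_ψ0, Φ_jj, ww, map_add, map_pow]

lemma Φ_Q : Φ Np Nm hp hm (Qq Np Nm) = WW hp hm := by
  rw [hQ hp hm, map_add, map_pow, Φ_χ0, Φ_jj, WW]

lemma Ψ_ww : innerHom Np Nm hp hm (ww hp hm) = Pp Np Nm := by
  rw [ww, map_add, map_pow, innerHom_X, innerHom_C, hP hp hm]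

lemma Ψ_WW : Ψ Np Nm hp hm (WW hp hm) = Qq Np Nm := by
  rw [WW, map_add, map_pow, Ψ_X, Ψ_C, innerHom_C, hQ hp hm]


lemma deg_le_one_of_lt_two {R : Type*} [Semiring R] {p : Polynomial R}
    (h : p.degree < 2) : p.degree ≤ 1 := by
  rcases hd : p.degree with _ | n
  · exact bot_le
  · rw [hd, WithBot.some_eq_coe] at h
    rw [WithBot.some_eq_coe]
    have e2 : ((2 : ℕ) : WithBot ℕ) = 2 := rfl
    have e1 : ((1 : ℕ) : WithBot ℕ) = 1 := rfl
    rw [← e2] at h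
    rw [← e1]
    exact WithBot.coe_le_coe.mpr (Nat.lt_succ_iff.mp (WithBot.coe_lt_coe.mp h))

lemma deg_CCX {R : Type*} [Semiring R] (x y : R) :
    (Polynomial.C x + Polynomial.C y * Polynomial.X).degree ≤ 1 := by
  refine le_trans (Polynomial.degree_add_le _ _) (max_le (le_trans Polynomial.degree_C_le
    (by decide)) (le_trans (Polynomial.degree_mul_le _ _) ?_))
  calc Polynomial.degree (Polynomial.C y) + Polynomial.degree (Polynomial.X (R := R))
      ≤ 0 + 1 := add_le_add Polynomial.degree_C_le Polynomial.degree_X_le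
    _ = 1 := by rw [zero_add]

-- if f has degree ≤ 1 and f = C w * s + W * t then f = C w * (s %ₘ W)
lemma core1 (f s t : B2 Np Nm hp hm) (hdeg : f.degree ≤ 1)
    (hf : f = Polynomial.C (ww hp hm) * s + WW hp hm * t) :
    f = Polynomial.C (ww hp hm) * (s %ₘ WW hp hm) := by
  have h1 : f %ₘ WW hp hm = f :=
    (Polynomial.modByMonic_eq_self_iff (WW_monic hp hm)).2
      (lt_of_le_of_lt hdeg (by rw [WW_degree hp hm]; decide))
  conv_lhs => rw [← h1, hf]
  rw [Polynomial.add_modByMonic, ← Polynomial.smul_eq_C_mul, Polynomial.smul_modByMonic,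
    Polynomial.smul_eq_C_mul,
    (Polynomial.modByMonic_eq_zero_iff_dvd (WW_monic hp hm)).2 ⟨t, rfl⟩, add_zero]

lemma core2 (u z : Polynomial (A2 Np Nm hp hm)) (hdeg : u.degree ≤ 1)
    (h : u = ww hp hm * z) : u = 0 := by
  by_cases hz : z = 0
  · rw [h, hz, mul_zero]
  · exfalso
    have h2 : (2 : WithBot ℕ) ≤ u.degree := by
      rw [h, Polynomial.degree_mul, ww_degree hp hm]
      calc (2 : WithBot ℕ) = 2 + 0 := by rw [add_zero]
        _ ≤ 2 + z.degree := by
            exact add_le_add_right (Polynomial.zero_le_degree_iff.2 hz) 2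
    exact absurd (h2.trans hdeg) (by decide)

lemma uniq (a b c e : A2 Np Nm hp hm) (s t : R2 Np Nm)
    (h : jj Np Nm hp hm a + ψ ⟨0, hp⟩ * jj Np Nm hp hm b + χ ⟨0, hm⟩ * jj Np Nm hp hm c
        + ψ ⟨0, hp⟩ * χ ⟨0, hm⟩ * jj Np Nm hp hm e = Pp Np Nm * s + Qq Np Nm * t) :
    a = 0 ∧ b = 0 ∧ c = 0 ∧ e = 0 := by
  have hΦ := congrArg (Φ Np Nm hp hm) h
  simp only [map_add, map_mul, Φ_jj, Φ_ψ0, Φ_χ0, Φ_P, Φ_Q] at hΦ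
  set u0 : Polynomial (A2 Np Nm hp hm) := Polynomial.C a + Polynomial.C b * Polynomial.X with hu0
  set u1 : Polynomial (A2 Np Nm hp hm) := Polynomial.C c + Polynomial.C e * Polynomial.X with hu1
  have hf : Polynomial.C u0 + Polynomial.C u1 * Polynomial.X
      = Polynomial.C (ww hp hm) * Φ Np Nm hp hm s + WW hp hm * Φ Np Nm hp hm t := by
    rw [← hΦ, hu0, hu1, map_add, map_add, map_mul, map_mul]; ring
  have hcore := core1 hp hm _ _ _ (deg_CCX u0 u1) hf
  set z := Φ Np Nm hp hm s %ₘ WW hp hm with hz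
  have h0 : u0 = ww hp hm * z.coeff 0 := by
    have := congrArg (fun q => Polynomial.coeff q 0) hcore
    simpa [Polynomial.coeff_add, Polynomial.coeff_C_mul, Polynomial.coeff_X_zero,
      Polynomial.coeff_C] using this
  have h1 : u1 = ww hp hm * z.coeff 1 := by
    have := congrArg (fun q => Polynomial.coeff q 1) hcore
    simpa [Polynomial.coeff_add, Polynomial.coeff_C_mul, Polynomial.coeff_X_one,
      Polynomial.coeff_C] using this
  have hu0z : u0 = 0 := core2 hp hm _ _ (deg_CCX a b) h0
  have hu1z : u1 = 0 := core2 hp hm _ _ (deg_CCX c e) h1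
  have ha : a = 0 := by
    have := congrArg (fun q => Polynomial.coeff q 0) hu0z
    simpa [hu0, Polynomial.coeff_add, Polynomial.coeff_C_mul, Polynomial.coeff_X_zero,
      Polynomial.coeff_C] using this
  have hb : b = 0 := by
    have := congrArg (fun q => Polynomial.coeff q 1) hu0z
    simpa [hu0, Polynomial.coeff_add, Polynomial.coeff_C_mul, Polynomial.coeff_X_one,
      Polynomial.coeff_C] using this
  have hc : c = 0 := by
    have := congrArg (fun q => Polynomial.coeff q 0) hu1z
    simpa [hu1, Polynomial.coeff_add, Polynomial.coeff_C_mul, Polynomial.coeff_X_zero,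
      Polynomial.coeff_C] using this
  have he : e = 0 := by
    have := congrArg (fun q => Polynomial.coeff q 1) hu1z
    simpa [hu1, Polynomial.coeff_add, Polynomial.coeff_C_mul, Polynomial.coeff_X_one,
      Polynomial.coeff_C] using this
  exact ⟨ha, hb, hc, he⟩


include hp hm in
lemma Qdvd (x y : R2 Np Nm) (h : Pp Np Nm * x + Qq Np Nm * y = 0) :
    ∃ u, x = Qq Np Nm * u := by
  have hΦ := congrArg (Φ Np Nm hp hm) h
  simp only [map_add, map_mul, Φ_P, Φ_Q, map_zero] at hΦ
  have hdvd : WW hp hm ∣ Polynomial.C (ww hp hm) * Φ Np Nm hp hm x :=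
    ⟨-Φ Np Nm hp hm y, by rw [mul_neg]; exact eq_neg_of_add_eq_zero_left hΦ⟩
  have h2 := (Polynomial.modByMonic_eq_zero_iff_dvd (WW_monic hp hm)).2 hdvd
  rw [← Polynomial.smul_eq_C_mul, Polynomial.smul_modByMonic, Polynomial.smul_eq_C_mul] at h2
  have hwne : (Polynomial.C (ww hp hm) : B2 Np Nm hp hm) ≠ 0 := by
    simpa [Polynomial.C_eq_zero] using (ww_monic hp hm).ne_zero
  have h3 : Φ Np Nm hp hm x %ₘ WW hp hm = 0 := by
    rcases mul_eq_zero.1 h2 with h' | h'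
    · exact absurd h' hwne
    · exact h'
  obtain ⟨z, hz⟩ := (Polynomial.modByMonic_eq_zero_iff_dvd (WW_monic hp hm)).1 h3
  refine ⟨Ψ Np Nm hp hm z, ?_⟩
  have := congrArg (Ψ Np Nm hp hm) hz
  rwa [Ψ_Φ, map_mul, Ψ_WW] at this

lemma normal_form (r : R2 Np Nm) :
    ∃ (a b c e : A2 Np Nm hp hm) (s t : R2 Np Nm),
      r = Pp Np Nm * s + Qq Np Nm * t
        + (jj Np Nm hp hm a + ψ ⟨0, hp⟩ * jj Np Nm hp hm b + χ ⟨0, hm⟩ * jj Np Nm hp hm c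
           + ψ ⟨0, hp⟩ * χ ⟨0, hm⟩ * jj Np Nm hp hm e) := by
  set f := Φ Np Nm hp hm r with hfdef
  have hdiv := Polynomial.modByMonic_add_div f (WW hp hm)
  set rem := f %ₘ WW hp hm with hrem
  have hrd : rem.degree ≤ 1 :=
    deg_le_one_of_lt_two (by
      rw [hrem]
      exact lt_of_lt_of_le (Polynomial.degree_modByMonic_lt f (WW_monic hp hm))
        (le_of_eq (WW_degree hp hm)))
  have hremeq : rem = Polynomial.C (rem.coeff 1) * Polynomial.X + Polynomial.C (rem.coeff 0) :=
    Polynomial.eq_X_add_C_of_degree_le_one hrd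
  set g0 := rem.coeff 0 with hg0
  set g1 := rem.coeff 1 with hg1
  have hgd : ∀ g : Polynomial (A2 Np Nm hp hm),
      g = ww hp hm * (g /ₘ ww hp hm)
        + (Polynomial.C ((g %ₘ ww hp hm).coeff 1) * Polynomial.X
           + Polynomial.C ((g %ₘ ww hp hm).coeff 0)) := by
    intro g
    have hd := Polynomial.modByMonic_add_div g (ww hp hm)
    have hrd' : (g %ₘ ww hp hm).degree ≤ 1 :=
      deg_le_one_of_lt_two (by
        exact lt_of_lt_of_le (Polynomial.degree_modByMonic_lt g (ww_monic hp hm))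
          (le_of_eq (ww_degree hp hm)))
    conv_lhs => rw [← hd]
    rw [← Polynomial.eq_X_add_C_of_degree_le_one hrd']
    exact add_comm _ _
  -- apply Ψ to f = WW * (f /ₘ WW) + C g1 * X + C g0
  have hfeq : f = WW hp hm * (f /ₘ WW hp hm) + (Polynomial.C g1 * Polynomial.X
      + Polynomial.C g0) := by
    conv_lhs => rw [← hdiv]
    rw [← hremeq]
    exact add_comm _ _
  have hr := congrArg (Ψ Np Nm hp hm) hfeq
  rw [Ψ_Φ] at hr
  simp only [map_add, map_mul, Ψ_WW, Ψ_C, Ψ_X] at hr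
  have hi : ∀ g : Polynomial (A2 Np Nm hp hm),
      innerHom Np Nm hp hm g = Pp Np Nm * innerHom Np Nm hp hm (g /ₘ ww hp hm)
        + (jj Np Nm hp hm ((g %ₘ ww hp hm).coeff 1) * ψ ⟨0, hp⟩
           + jj Np Nm hp hm ((g %ₘ ww hp hm).coeff 0)) := by
    intro g
    conv_lhs => rw [hgd g]
    simp only [map_add, map_mul, Ψ_ww, innerHom_C, innerHom_X]
  rw [hi g0, hi g1] at hr
  refine ⟨(g0 %ₘ ww hp hm).coeff 0, (g0 %ₘ ww hp hm).coeff 1, (g1 %ₘ ww hp hm).coeff 0,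
    (g1 %ₘ ww hp hm).coeff 1,
    innerHom Np Nm hp hm (g0 /ₘ ww hp hm) + innerHom Np Nm hp hm (g1 /ₘ ww hp hm) * χ ⟨0, hm⟩,
    Ψ Np Nm hp hm (f /ₘ WW hp hm), ?_⟩
  rw [hr]
  ring

lemma jj_mem_coefRing (a : A2 Np Nm hp hm) :
    jj Np Nm hp hm a ∈ MvPolynomial.supported ℂ (SSet Np Nm hp hm) := by
  rw [supported_eq_range_rename]
  exact ⟨a, rfl⟩

lemma coefRing_mem_jj (x : R2 Np Nm) (hx : x ∈ MvPolynomial.supported ℂ (SSet Np Nm hp hm)) :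
    ∃ a, x = jj Np Nm hp hm a := by
  rw [supported_eq_range_rename] at hx
  obtain ⟨a, ha⟩ := hx
  exact ⟨a, ha.symm⟩


lemma sigma2_sq : sigma2 * sigma2 = 1 := by
  ext i j
  fin_cases i <;> fin_cases j <;>
    simp [sigma2, Matrix.mul_apply, Fin.sum_univ_two, Complex.I_mul_I]

omit hp hm in
lemma key (S : Matrix (Fin 2) (Fin 2) ℂ) (hS : IsUnit S.det) :
    ∑ α, ∑ β, S⁻¹ 0 α * (Complex.I * S⁻¹ 1 β) * ((Gam S * (Cmat S)⁻¹) α β) = 1 := by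
  have hdetT : IsUnit S.transpose.det := by rwa [Matrix.det_transpose]
  have hσ2inv : sigma2⁻¹ = sigma2 := Matrix.inv_eq_right_inv sigma2_sq
  have hC : (Cmat S)⁻¹ = S * (sigma2 * S.transpose) := by
    rw [Cmat, Matrix.mul_inv_rev, Matrix.mul_inv_rev, hσ2inv,
      Matrix.nonsing_inv_nonsing_inv S hS, Matrix.nonsing_inv_nonsing_inv S.transpose hdetT]
  have hTT : S.transpose * (S⁻¹).transpose = 1 := by
    rw [← Matrix.transpose_mul, Matrix.nonsing_inv_mul S hS, Matrix.transpose_one]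
  have hM : S⁻¹ * (Gam S * (Cmat S)⁻¹) * (S⁻¹).transpose = sigma3 * sigma2 := by
    rw [Gam, hC]
    simp only [Matrix.mul_assoc]
    rw [Matrix.nonsing_inv_mul_cancel_left S _ hS, Matrix.nonsing_inv_mul_cancel_left S _ hS,
      hTT, Matrix.mul_one]
  have h01 := congrFun (congrFun hM 0) 1
  simp [Matrix.mul_apply, Matrix.transpose_apply, Fin.sum_univ_two, sigma3, sigma2] at h01
  simp only [Matrix.mul_apply, Fin.sum_univ_two]
  linear_combination Complex.I * h01 - Complex.I_sq


lemma coefRing_eq :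
    coefRing Np Nm hp hm = MvPolynomial.supported ℂ (SSet Np Nm hp hm) := rfl

omit hm in
lemma sumP (S : Matrix (Fin 2) (Fin 2) ℂ) (ap : Fin 2 → R2 Np Nm) :
    ∑ α, xiP S ⟨0, hp⟩ α * ap α
      = ψ ⟨0, hp⟩ * (C (S⁻¹ 0 0) * ap 0 + C (S⁻¹ 0 1) * ap 1) := by
  simp only [xiP, Fin.sum_univ_two]
  ring

omit hp in
lemma sumM (S : Matrix (Fin 2) (Fin 2) ℂ) (am : Fin 2 → R2 Np Nm) :
    ∑ α, xiM S ⟨0, hm⟩ α * am α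
      = χ ⟨0, hm⟩ * (C (Complex.I * S⁻¹ 1 0) * am 0 + C (Complex.I * S⁻¹ 1 1) * am 1) := by
  simp only [xiM, Fin.sum_univ_two]
  ring

lemma quad_eq (S : Matrix (Fin 2) (Fin 2) ℂ) (hS : IsUnit S.det) :
    ∑ α, ∑ β, xiP S ⟨0, hp⟩ α * xiM S ⟨0, hm⟩ β * C ((Gam S * (Cmat S)⁻¹) α β)
      = (ψ ⟨0, hp⟩ : R2 Np Nm) * χ ⟨0, hm⟩ := by
  have k := key S hS
  simp only [Fin.sum_univ_two] at k
  have k' := congrArg (C : ℂ → R2 Np Nm) k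
  simp only [map_add, map_mul, map_one] at k'
  simp only [xiP, xiM, Fin.sum_univ_two, map_mul]
  linear_combination (ψ (⟨0, hp⟩ : Fin Np) * χ (⟨0, hm⟩ : Fin Nm) : R2 Np Nm) * k'

lemma Cmul_mem {z : ℂ} {x : R2 Np Nm} (hx : x ∈ coefRing Np Nm hp hm) :
    C z * x ∈ coefRing Np Nm hp hm := by
  rw [← MvPolynomial.smul_eq_C_mul]
  exact Subalgebra.smul_mem _ hx z

lemma jj_mem (a : A2 Np Nm hp hm) : jj Np Nm hp hm a ∈ coefRing Np Nm hp hm := by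
  rw [coefRing_eq]
  exact jj_mem_coefRing hp hm a

lemma mem_jj {x : R2 Np Nm} (hx : x ∈ coefRing Np Nm hp hm) :
    ∃ a, x = jj Np Nm hp hm a := by
  rw [coefRing_eq] at hx
  exact coefRing_mem_jj hp hm x hx

include hp hm in
lemma Qq_ne : Qq Np Nm ≠ 0 := fun h =>
  (WW_monic hp hm).ne_zero (by rw [← Φ_Q hp hm, h, map_zero])

end Stmt3Aux



open Stmt3Aux in
/-- for `N₊ ≥ 1`, `N₋ ≥ 1` and any invertible `S` (equivalent spinor
representation), (i) `dω = 0` iff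
`ω ∼ a + Σ_α ξ₁₊^α a₊_α + Σ_α ξ₁₋^α a₋_α + (Σ_{α,β} ξ₁₊^α ξ₁₋^β (ΓC⁻¹)_{αβ}) a₊₋`
with coefficients in `ℂ[ψ₂,…,ψ_{N₊}, χ₂,…,χ_{N₋}]`; (ii) such a combination is `∼ 0`
iff `a = a₊₋ = 0`, `Σ_α ξ₁₊^α a₊_α = 0` and `Σ_α ξ₁₋^α a₋_α = 0`. -/
theorem stmt3 (Np Nm : ℕ) (hp : 0 < Np) (hm : 0 < Nm)
    (S : Matrix (Fin 2) (Fin 2) ℂ) (hS : IsUnit S.det) :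
    (∀ ω : Om2 Np Nm, d2 ω = 0 ↔
      ∃ a ∈ coefRing Np Nm hp hm,
      ∃ ap : Fin 2 → R2 Np Nm, (∀ α, ap α ∈ coefRing Np Nm hp hm) ∧
      ∃ am : Fin 2 → R2 Np Nm, (∀ α, am α ∈ coefRing Np Nm hp hm) ∧
      ∃ apm ∈ coefRing Np Nm hp hm,
        Equiv2 ω (ofR (a + (∑ α, xiP S ⟨0, hp⟩ α * ap α)
          + (∑ α, xiM S ⟨0, hm⟩ α * am α)
          + (∑ α, ∑ β, xiP S ⟨0, hp⟩ α * xiM S ⟨0, hm⟩ β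
              * C ((Gam S * (Cmat S)⁻¹) α β)) * apm)))
    ∧
    (∀ (a : R2 Np Nm) (ap am : Fin 2 → R2 Np Nm) (apm : R2 Np Nm),
      a ∈ coefRing Np Nm hp hm → (∀ α, ap α ∈ coefRing Np Nm hp hm) →
      (∀ α, am α ∈ coefRing Np Nm hp hm) → apm ∈ coefRing Np Nm hp hm →
      (Equiv2 (ofR (a + (∑ α, xiP S ⟨0, hp⟩ α * ap α)
          + (∑ α, xiM S ⟨0, hm⟩ α * am α)
          + (∑ α, ∑ β, xiP S ⟨0, hp⟩ α * xiM S ⟨0, hm⟩ β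
              * C ((Gam S * (Cmat S)⁻¹) α β)) * apm)) 0 ↔
        (a = 0 ∧ apm = 0 ∧ (∑ α, xiP S ⟨0, hp⟩ α * ap α) = 0
          ∧ (∑ α, xiM S ⟨0, hm⟩ α * am α) = 0))) := by
  have hQne : Qq Np Nm ≠ 0 := Qq_ne hp hm
  constructor
  · intro ω
    constructor
    · intro hd
      have h0 : Pp Np Nm * ω 1 + Qq Np Nm * ω 2 = 0 := congrFun hd 0
      have h1 : -(Qq Np Nm * ω 3) = 0 := congrFun hd 1
      have hω3 : ω 3 = 0 := by
        rcases mul_eq_zero.1 (neg_eq_zero.1 h1) with h | h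
        · exact absurd h hQne
        · exact h
      obtain ⟨u, hu⟩ := Qdvd hp hm (ω 1) (ω 2) h0
      have hω2 : ω 2 = -(Pp Np Nm * u) := by
        have hz : Qq Np Nm * (Pp Np Nm * u + ω 2) = 0 := by
          rw [hu] at h0; linear_combination h0
        rcases mul_eq_zero.1 hz with h | h
        · exact absurd h hQne
        · exact eq_neg_of_add_eq_zero_right h
      obtain ⟨a, b, c, e, s, t, hnf⟩ := normal_form hp hm (ω 0)
      have h00 := congrFun (congrFun (Matrix.nonsing_inv_mul S hS) 0) 0
      have h11 := congrFun (congrFun (Matrix.nonsing_inv_mul S hS) 1) 1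
      simp only [Matrix.mul_apply, Fin.sum_univ_two, Matrix.one_apply_eq] at h00 h11
      refine ⟨jj Np Nm hp hm a, jj_mem hp hm a,
        fun α => C (S α 0) * jj Np Nm hp hm b,
        fun α => Cmul_mem hp hm (jj_mem hp hm b),
        fun α => C (-Complex.I * S α 1) * jj Np Nm hp hm c,
        fun α => Cmul_mem hp hm (jj_mem hp hm c),
        jj Np Nm hp hm e, jj_mem hp hm e, ?_⟩
      have hsump : ∑ α, xiP S ⟨0, hp⟩ α * (C (S α 0) * jj Np Nm hp hm b)
          = ψ ⟨0, hp⟩ * jj Np Nm hp hm b := by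
        rw [sumP hp]
        have h00' : (C (S⁻¹ 0 0) * C (S 0 0) + C (S⁻¹ 0 1) * C (S 1 0) : R2 Np Nm) = 1 := by
          rw [← map_mul, ← map_mul, ← map_add, h00, map_one]
        linear_combination (ψ (⟨0, hp⟩ : Fin Np) * jj Np Nm hp hm b : R2 Np Nm) * h00'
      have hsumm : ∑ α, xiM S ⟨0, hm⟩ α * (C (-Complex.I * S α 1) * jj Np Nm hp hm c)
          = χ ⟨0, hm⟩ * jj Np Nm hp hm c := by
        rw [sumM hm]
        have hc2 : (Complex.I * S⁻¹ 1 0) * (-Complex.I * S 0 1)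
            + (Complex.I * S⁻¹ 1 1) * (-Complex.I * S 1 1) = 1 := by
          linear_combination (-Complex.I ^ 2) * h11 - Complex.I_sq
        have h11' : (C (Complex.I * S⁻¹ 1 0) * C (-Complex.I * S 0 1)
            + C (Complex.I * S⁻¹ 1 1) * C (-Complex.I * S 1 1) : R2 Np Nm) = 1 := by
          rw [← map_mul, ← map_mul, ← map_add, hc2, map_one]
        linear_combination (χ (⟨0, hm⟩ : Fin Nm) * jj Np Nm hp hm c : R2 Np Nm) * h11'
      have hquad := quad_eq hp hm S hS
      refine ⟨![0, s, t, -u], ?_⟩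
      have comp0 : ω 0 - (jj Np Nm hp hm a
          + (∑ α, xiP S ⟨0, hp⟩ α * (C (S α 0) * jj Np Nm hp hm b))
          + (∑ α, xiM S ⟨0, hm⟩ α * (C (-Complex.I * S α 1) * jj Np Nm hp hm c))
          + (∑ α, ∑ β, xiP S ⟨0, hp⟩ α * xiM S ⟨0, hm⟩ β
              * C ((Gam S * (Cmat S)⁻¹) α β)) * jj Np Nm hp hm e)
          = Pp Np Nm * s + Qq Np Nm * t := by
        rw [hsump, hsumm, hquad, hnf]; ring
      have comp1 : ω 1 - 0 = -(Qq Np Nm * -u) := by rw [hu]; ring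
      have comp2 : ω 2 - 0 = Pp Np Nm * -u := by rw [hω2]; ring
      have comp3 : ω 3 - (0 : R2 Np Nm) = 0 := by rw [hω3]; ring
      funext i
      fin_cases i
      exacts [comp0, comp1, comp2, comp3]
    · rintro ⟨a, ha, ap, hap, am, ham, apm, hapm, ρ, hρ⟩
      have e1 : ω 1 - 0 = -(Qq Np Nm * ρ 3) := congrFun hρ 1
      have e2 : ω 2 - 0 = Pp Np Nm * ρ 3 := congrFun hρ 2
      have e3 : ω 3 - (0 : R2 Np Nm) = 0 := congrFun hρ 3
      have c0 : Pp Np Nm * ω 1 + Qq Np Nm * ω 2 = 0 := by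
        linear_combination (Pp Np Nm) * e1 + (Qq Np Nm) * e2
      have c1 : -(Qq Np Nm * ω 3) = 0 := by
        linear_combination (-(Qq Np Nm)) * e3
      have c2 : Pp Np Nm * ω 3 = 0 := by
        linear_combination (Pp Np Nm) * e3
      have c3 : (0 : R2 Np Nm) = 0 := rfl
      funext i
      fin_cases i
      exacts [c0, c1, c2, c3]
  · intro a ap am apm ha hap ham hapm
    have hbbm : C (S⁻¹ 0 0) * ap 0 + C (S⁻¹ 0 1) * ap 1 ∈ coefRing Np Nm hp hm :=
      add_mem (Cmul_mem hp hm (hap 0)) (Cmul_mem hp hm (hap 1))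
    have hccm : C (Complex.I * S⁻¹ 1 0) * am 0 + C (Complex.I * S⁻¹ 1 1) * am 1
        ∈ coefRing Np Nm hp hm :=
      add_mem (Cmul_mem hp hm (ham 0)) (Cmul_mem hp hm (ham 1))
    constructor
    · rintro ⟨ρ, hρ⟩
      have e0 : (a + (∑ α, xiP S ⟨0, hp⟩ α * ap α)
          + (∑ α, xiM S ⟨0, hm⟩ α * am α)
          + (∑ α, ∑ β, xiP S ⟨0, hp⟩ α * xiM S ⟨0, hm⟩ β
              * C ((Gam S * (Cmat S)⁻¹) α β)) * apm) - 0
          = Pp Np Nm * ρ 1 + Qq Np Nm * ρ 2 := congrFun hρ 0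
      obtain ⟨ta, hta⟩ := mem_jj hp hm ha
      obtain ⟨tb, htb⟩ := mem_jj hp hm hbbm
      obtain ⟨tc, htc⟩ := mem_jj hp hm hccm
      obtain ⟨te, hte⟩ := mem_jj hp hm hapm
      have hEeq : jj Np Nm hp hm ta + ψ ⟨0, hp⟩ * jj Np Nm hp hm tb
          + χ ⟨0, hm⟩ * jj Np Nm hp hm tc
          + ψ ⟨0, hp⟩ * χ ⟨0, hm⟩ * jj Np Nm hp hm te
          = Pp Np Nm * ρ 1 + Qq Np Nm * ρ 2 := by
        rw [← hta, ← htb, ← htc, ← hte, ← e0, sumP hp, sumM hm, quad_eq hp hm S hS]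
        ring
      obtain ⟨hA, hB, hC2, hE⟩ := uniq hp hm ta tb tc te _ _ hEeq
      refine ⟨by rw [hta, hA, map_zero], by rw [hte, hE, map_zero], ?_, ?_⟩
      · rw [sumP hp, htb, hB, map_zero, mul_zero]
      · rw [sumM hm, htc, hC2, map_zero, mul_zero]
    · rintro ⟨hA, hE, hB, hC2⟩
      refine ⟨0, ?_⟩
      have c0 : (a + (∑ α, xiP S ⟨0, hp⟩ α * ap α)
          + (∑ α, xiM S ⟨0, hm⟩ α * am α)
          + (∑ α, ∑ β, xiP S ⟨0, hp⟩ α * xiM S ⟨0, hm⟩ β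
              * C ((Gam S * (Cmat S)⁻¹) α β)) * apm) - 0
          = Pp Np Nm * (0 : R2 Np Nm) + Qq Np Nm * (0 : R2 Np Nm) := by
        rw [hA, hB, hC2, hE]; ring
      have c1 : (0 : R2 Np Nm) - 0 = -(Qq Np Nm * (0 : R2 Np Nm)) := by ring
      have c2 : (0 : R2 Np Nm) - 0 = Pp Np Nm * (0 : R2 Np Nm) := by ring
      have c3 : (0 : R2 Np Nm) - 0 = 0 := by ring
      funext i
      fin_cases i
      exacts [c0, c1, c2, c3]
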